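/- arXiv:1004.0888 — 2 statements merged into one kernel-verified Lean document; each statement's English description precedes it below -/
import Mathlib

section
/- Let d ≥ 2 and let W₁, …, W_{d²−1} ∈ Matrix (Fin d) (Fin d) ℂ be unitary matrices with Tr(Wⱼ) = 0 for all j and Tr(Wⱼᴴ W_k) = 0 for all j ≠ k (so that {1/√d, Wⱼ/√d} is an orthonormal basis of the d×d matrices). Then for every matrix ρ ∈ Matrix (Fin d) (Fin d) ℂ: ρ + ∑_{j=1}^{d²−1} Wⱼ ρ Wⱼᴴ = d · Tr(ρ) · 1. -/
open Matrix Kronecker BigOperators ComplexOrder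

noncomputable def traceNorm {n : Type*} [Fintype n] [DecidableEq n] (A : Matrix n n ℂ) : ℝ :=
  (((Matrix.posSemidef_conjTranspose_mul_self A).1.eigenvectorUnitary.1 *
    Matrix.diagonal (((↑) : ℝ → ℂ) ∘ Real.sqrt ∘ (Matrix.posSemidef_conjTranspose_mul_self A).1.eigenvalues) *
    (star (Matrix.posSemidef_conjTranspose_mul_self A).1.eigenvectorUnitary : Matrix n n ℂ)).trace).re

def IsDensity {n : Type*} [Fintype n] (ρ : Matrix n n ℂ) : Prop :=
  ρ.PosSemidef ∧ ρ.trace = 1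

def tensorId {X Y Z : Type*} (Φ : Matrix X X ℂ → Matrix Y Y ℂ)
    (ρ : Matrix (X × Z) (X × Z) ℂ) : Matrix (Y × Z) (Y × Z) ℂ :=
  Matrix.of fun p q => Φ (Matrix.of fun x x' => ρ (x, p.2) (x', q.2)) p.1 q.1

noncomputable def ChoiMatrix {X Y : Type*} [Fintype X] [DecidableEq X] [Fintype Y]
    (Φ : Matrix X X ℂ → Matrix Y Y ℂ) : Matrix (Y × X) (Y × X) ℂ :=
  ∑ j : X, ∑ k : X, (Φ (Matrix.single j k 1)) ⊗ₖ (Matrix.single j k 1)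

def IsChannel {X Y : Type*} [Fintype X] [DecidableEq X] [Fintype Y]
    (Φ : Matrix X X ℂ →ₗ[ℂ] Matrix Y Y ℂ) : Prop :=
  (∀ M, (Φ M).trace = M.trace) ∧ (ChoiMatrix (⇑Φ)).PosSemidef

def SeparableOp {Y Z : Type*} [Fintype Y] [Fintype Z]
    (P : Matrix (Y × Z) (Y × Z) ℂ) : Prop :=
  ∃ (N : ℕ) (Q : Fin N → Matrix Y Y ℂ) (R : Fin N → Matrix Z Z ℂ),
    (∀ i, (Q i).PosSemidef) ∧ (∀ i, (R i).PosSemidef) ∧ P = ∑ i, Q i ⊗ₖ R i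

def partialTranspose {Y Z : Type*} (M : Matrix (Y × Z) (Y × Z) ℂ) :
    Matrix (Y × Z) (Y × Z) ℂ :=
  Matrix.of fun p q => M (p.1, q.2) (q.1, p.2)

def IsPPT {Y Z : Type*} [Fintype Y] [Fintype Z] (M : Matrix (Y × Z) (Y × Z) ℂ) : Prop :=
  M.PosSemidef ∧ (partialTranspose M).PosSemidef

/-- for an orthonormal family of `d² - 1` traceless unitaries `Wⱼ`,
`ρ + ∑ⱼ Wⱼ ρ Wⱼᴴ = d · Tr(ρ) · 1`. -/
theorem sum_unitary_conj_eq_trace_smul_one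
    (d : ℕ) (hd : 2 ≤ d) (W : Fin (d ^ 2 - 1) → Matrix (Fin d) (Fin d) ℂ)
    (hWunit : ∀ j, (W j)ᴴ * W j = 1)
    (hWtr : ∀ j, (W j).trace = 0)
    (hWorth : ∀ j k, j ≠ k → ((W j)ᴴ * W k).trace = 0)
    (ρ : Matrix (Fin d) (Fin d) ℂ) :
    ρ + ∑ j, W j * ρ * (W j)ᴴ = ((d : ℂ) * ρ.trace) • (1 : Matrix (Fin d) (Fin d) ℂ) := by
  classical
  have hdpos : 0 < d := by omega
  have hcard : d ^ 2 - 1 + 1 = d ^ 2 := Nat.succ_pred_eq_of_pos (pow_pos hdpos 2)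
  set B : Option (Fin (d ^ 2 - 1)) → Matrix (Fin d) (Fin d) ℂ :=
    fun a => Option.elim a 1 W with hB
  -- orthogonality of the family B
  have key1 : ∀ a b, ∑ p : Fin d, ∑ q : Fin d, B a p q * star (B b p q)
      = if a = b then (d : ℂ) else 0 := by
    have horth : ∀ a b, ((B b)ᴴ * B a).trace = if a = b then (d : ℂ) else 0 := by
      rintro (_|j) (_|k)
      · simp [hB]
      · simp [hB, Matrix.trace_conjTranspose, hWtr k]
      · simp [hB, hWtr j]
      · by_cases h : j = k
        · subst h; simpa [hB] using congrArg Matrix.trace (hWunit j)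
        · have := hWorth k j (fun h' => h h'.symm)
          simp [hB, h, this]
    intro a b
    have h := horth a b
    rw [Matrix.trace] at h
    simp only [Matrix.diag, Matrix.mul_apply, Matrix.conjTranspose_apply] at h
    rw [← h, Finset.sum_comm]
    exact Finset.sum_congr rfl fun p _ => Finset.sum_congr rfl fun q _ => mul_comm _ _
  -- pack into a square matrix
  have e : Option (Fin (d ^ 2 - 1)) ≃ Fin d × Fin d :=
    Fintype.equivOfCardEq (by
      rw [Fintype.card_option, Fintype.card_prod, Fintype.card_fin, Fintype.card_fin, ← sq]
      exact hcard)
  set M : Matrix (Fin d × Fin d) (Fin d × Fin d) ℂ :=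
    Matrix.of (fun a pq => B (e.symm a) pq.1 pq.2) with hM
  have hMM : M * Mᴴ = (d : ℂ) • 1 := by
    ext a b
    have h := key1 (e.symm a) (e.symm b)
    simp only [Matrix.mul_apply, Matrix.conjTranspose_apply, hM, Matrix.of_apply,
      Matrix.smul_apply, Matrix.one_apply, smul_eq_mul]
    rw [Fintype.sum_prod_type, h]
    by_cases hab : a = b
    · simp [hab]
    · rw [if_neg (fun hh => hab (e.symm.injective hh)), if_neg hab, mul_zero]
  have hdC : (d : ℂ) ≠ 0 := by exact_mod_cast hdpos.ne'
  have hMM' : Mᴴ * M = (d : ℂ) • 1 := by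
    have h1 : M * ((d : ℂ)⁻¹ • Mᴴ) = 1 := by
      rw [Matrix.mul_smul, hMM, smul_smul, inv_mul_cancel₀ hdC, one_smul]
    have h2 : ((d : ℂ)⁻¹ • Mᴴ) * M = 1 := (mul_eq_one_comm).mp h1
    calc Mᴴ * M = (d : ℂ) • (((d : ℂ)⁻¹ • Mᴴ) * M) := by
          rw [Matrix.smul_mul, smul_smul, mul_inv_cancel₀ hdC, one_smul]
      _ = (d : ℂ) • 1 := by rw [h2]
  -- completeness relation
  have key2 : ∀ p q r s : Fin d, ∑ a : Option (Fin (d ^ 2 - 1)), star (B a p q) * B a r s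
      = if (p, q) = (r, s) then (d : ℂ) else 0 := by
    intro p q r s
    have h := congrFun (congrFun hMM' (p, q)) (r, s)
    simp only [Matrix.mul_apply, Matrix.conjTranspose_apply, hM, Matrix.of_apply,
      Matrix.smul_apply, Matrix.one_apply, smul_eq_mul] at h
    rw [Fintype.sum_equiv e (fun a => star (B a p q) * B a r s)
      (fun x => star (B (e.symm x) p q) * B (e.symm x) r s) (fun a => by simp), h]
    split <;> simp
  -- main computation
  ext p q
  have expand : (ρ + ∑ j, W j * ρ * (W j)ᴴ) p q
      = ∑ a : Option (Fin (d ^ 2 - 1)), ∑ r : Fin d, ∑ s : Fin d,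
          B a p r * ρ r s * star (B a q s) := by
    rw [Fintype.sum_option, Matrix.add_apply, Matrix.sum_apply]
    congr 1
    · simp [hB, Matrix.one_apply]
    · refine Finset.sum_congr rfl fun j _ => ?_
      simp only [Matrix.mul_apply, Matrix.conjTranspose_apply, hB, Finset.sum_mul,
        Finset.mul_sum]
      rw [Finset.sum_comm]
      refine Finset.sum_congr rfl fun r _ => Finset.sum_congr rfl fun s _ => by
        simp only [Option.elim]; try ring
  rw [expand]
  rw [Finset.sum_comm]
  have : ∀ r : Fin d, ∑ a : Option (Fin (d ^ 2 - 1)), ∑ s : Fin d,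
      B a p r * ρ r s * star (B a q s)
      = ∑ s : Fin d, ρ r s * (if (q, s) = (p, r) then (d : ℂ) else 0) := by
    intro r
    rw [Finset.sum_comm]
    refine Finset.sum_congr rfl fun s _ => ?_
    rw [← key2 q s p r, Finset.mul_sum]
    exact Finset.sum_congr rfl fun a _ => by ring
  rw [Finset.sum_congr rfl fun r _ => this r]
  simp only [Prod.mk.injEq, Matrix.smul_apply, Matrix.one_apply, smul_eq_mul]
  by_cases hpq : p = q
  · subst hpq
    simp only [eq_self_iff_true, true_and, if_true, mul_one]
    rw [Matrix.trace, Finset.mul_sum]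
    refine Finset.sum_congr rfl fun r _ => ?_
    rw [Finset.sum_eq_single r (fun s _ hs => by simp [hs]) (by simp)]
    simp [Matrix.diag, mul_comm]
  · rw [if_neg hpq, mul_zero]
    refine Finset.sum_eq_zero fun r _ => Finset.sum_eq_zero fun s _ => ?_
    rw [if_neg (fun hh => hpq hh.1.symm), mul_zero]
end

section
/- Let d ≥ 2 and define the Werner–Holevo channels Φ₀, Φ₁ on Matrix (Fin d) (Fin d) ℂ by Φ₀(X) = (Tr(X)·1 + Xᵀ)/(d+1) and Φ₁(X) = (Tr(X)·1 − Xᵀ)/(d−1). Then for every density operator ρ on Fin d one has ‖Φ₀(ρ) − Φ₁(ρ)‖₁ ≤ 4/(d+1), and for every unit vector ψ ∈ ℂ^d one has ‖Φ₀(ψψᴴ) − Φ₁(ψψᴴ)‖₁ = 4/(d+1). (Consequently ‖Φ₀ − Φ₁‖_NE = 4/(d+1).) -/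
open Matrix Kronecker BigOperators ComplexOrder

open scoped MatrixOrder in
/-- Trace norm of a real-diagonal matrix conjugated by a unitary is the sum of
absolute values of the diagonal entries. -/
lemma traceNorm_conj_diag {n : Type*} [Fintype n] [DecidableEq n]
    (U : Matrix n n ℂ) (hU : U ∈ Matrix.unitaryGroup n ℂ) (ν : n → ℝ) :
    traceNorm (U * Matrix.diagonal (Complex.ofReal ∘ ν) * star U) = ∑ i, |ν i| := by
  set A := U * Matrix.diagonal (Complex.ofReal ∘ ν) * star U with hA
  have hU1 : U * star U = 1 := mem_unitaryGroup_iff.mp hU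
  have hU2 : star U * U = 1 := mem_unitaryGroup_iff'.mp hU
  have hcancel : ∀ X : Matrix n n ℂ, star U * (U * X) = X := fun X => by
    rw [← Matrix.mul_assoc, hU2, Matrix.one_mul]
  have hD : ∀ f : n → ℝ, (Matrix.diagonal (Complex.ofReal ∘ f))ᴴ
      = Matrix.diagonal (Complex.ofReal ∘ f) := by
    intro f
    have h : star (Complex.ofReal ∘ f) = Complex.ofReal ∘ f := by
      funext i; simp [Function.comp_apply]
    rw [diagonal_conjTranspose, h]
  have hdd : ∀ f g : n → ℝ,
      (U * Matrix.diagonal (Complex.ofReal ∘ f) * star U) *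
      (U * Matrix.diagonal (Complex.ofReal ∘ g) * star U)
      = U * Matrix.diagonal (Complex.ofReal ∘ fun i => f i * g i) * star U := by
    intro f g
    simp only [Matrix.mul_assoc]
    rw [hcancel, ← Matrix.mul_assoc (Matrix.diagonal _), diagonal_mul_diagonal]
    have he : (fun i => (Complex.ofReal ∘ f) i * (Complex.ofReal ∘ g) i)
        = Complex.ofReal ∘ fun i => f i * g i := by
      funext i; simp [Function.comp_apply]
    rw [he]
  have hAH : Aᴴ = A := by
    rw [hA, star_eq_conjTranspose, conjTranspose_mul, conjTranspose_mul,
      conjTranspose_conjTranspose, hD, Matrix.mul_assoc]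
  set B := U * Matrix.diagonal (Complex.ofReal ∘ fun i => |ν i|) * star U with hB
  have hBpsd : B.PosSemidef := by
    have h := PosSemidef.mul_mul_conjTranspose_same
      (posSemidef_diagonal_iff.mpr fun i : n =>
        show (0:ℂ) ≤ (Complex.ofReal ∘ fun j => |ν j|) i from
          Complex.zero_le_real.mpr (abs_nonneg _)) U
    rwa [← star_eq_conjTranspose] at h
  have hB2 : B ^ 2 = Aᴴ * A := by
    rw [hAH, pow_two, hB, hA, hdd, hdd]
    have he : (fun i => |ν i| * |ν i|) = fun i => ν i * ν i := by
      funext i; exact abs_mul_abs_self _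
    rw [he]
  have hsq : B = (Matrix.posSemidef_conjTranspose_mul_self A).1.eigenvectorUnitary.1 *
      Matrix.diagonal (((↑) : ℝ → ℂ) ∘ Real.sqrt ∘
        (Matrix.posSemidef_conjTranspose_mul_self A).1.eigenvalues) *
      (star (Matrix.posSemidef_conjTranspose_mul_self A).1.eigenvectorUnitary : Matrix n n ℂ) := by
    have h0 := (Matrix.posSemidef_conjTranspose_mul_self A).nonneg
    have hH := (Matrix.posSemidef_conjTranspose_mul_self A).1
    have e := (CFC.sqrt_eq_iff (Aᴴ * A) B h0 hBpsd.nonneg).mpr (by rw [← sq]; exact hB2)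
    rw [← e, CFC.sqrt_eq_real_sqrt _ h0, cfcₙ_eq_cfc, hH.cfc_eq, IsHermitian.cfc,
      Unitary.conjStarAlgAut_apply]
    rfl
  rw [traceNorm, ← hsq, hB, Matrix.trace_mul_cycle, hU2, Matrix.one_mul, trace_diagonal]
  simp

/-- Spectral computation of the trace norm of `Φ₀ ρ - Φ₁ ρ`. -/
lemma wh_exists_eigen (d : ℕ)
    (Φ₀ Φ₁ : Matrix (Fin d) (Fin d) ℂ → Matrix (Fin d) (Fin d) ℂ)
    (hΦ₀ : ∀ X, Φ₀ X = ((d : ℂ) + 1)⁻¹ • (X.trace • (1 : Matrix (Fin d) (Fin d) ℂ) + Xᵀ))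
    (hΦ₁ : ∀ X, Φ₁ X = ((d : ℂ) - 1)⁻¹ • (X.trace • (1 : Matrix (Fin d) (Fin d) ℂ) - Xᵀ))
    (ρ : Matrix (Fin d) (Fin d) ℂ) (hρ : IsDensity ρ) :
    ∃ μ : Fin d → ℝ, (∀ i, 0 ≤ μ i) ∧ (∑ i, μ i = 1) ∧
      (ρ * ρ = ρ → ∀ i, μ i = 0 ∨ μ i = 1) ∧
      traceNorm (Φ₀ ρ - Φ₁ ρ)
        = ∑ i, |((d:ℝ)+1)⁻¹ * (1 + μ i) - ((d:ℝ)-1)⁻¹ * (1 - μ i)| := by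
  obtain ⟨hpsd, htr⟩ := hρ
  have hT : ρᵀ.PosSemidef := hpsd.transpose
  set U : Matrix (Fin d) (Fin d) ℂ := (hT.1.eigenvectorUnitary : Matrix (Fin d) (Fin d) ℂ)
    with hUdef
  set μ : Fin d → ℝ := hT.1.eigenvalues with hμdef
  have hUmem : U ∈ Matrix.unitaryGroup (Fin d) ℂ := hT.1.eigenvectorUnitary.2
  have hU1 : U * star U = 1 := mem_unitaryGroup_iff.mp hUmem
  have hU2 : star U * U = 1 := mem_unitaryGroup_iff'.mp hUmem
  have hspec : ρᵀ = U * Matrix.diagonal (Complex.ofReal ∘ μ) * star U := hT.1.spectral_theorem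
  have hadd : ∀ f g : Fin d → ℂ,
      U * Matrix.diagonal f * star U + U * Matrix.diagonal g * star U
        = U * Matrix.diagonal (f + g) * star U := by
    intro f g
    rw [← Matrix.add_mul, ← Matrix.mul_add, diagonal_add]
    rfl
  have hsub : ∀ f g : Fin d → ℂ,
      U * Matrix.diagonal f * star U - U * Matrix.diagonal g * star U
        = U * Matrix.diagonal (f - g) * star U := by
    intro f g
    rw [← Matrix.sub_mul, ← Matrix.mul_sub, diagonal_sub]
    rfl
  have hsmul : ∀ (c : ℂ) (f : Fin d → ℂ),
      c • (U * Matrix.diagonal f * star U) = U * Matrix.diagonal (c • f) * star U := by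
    intro c f
    rw [diagonal_smul, Matrix.mul_smul, Matrix.smul_mul]
  have hone : (1 : Matrix (Fin d) (Fin d) ℂ)
      = U * Matrix.diagonal (fun _ => (1:ℂ)) * star U := by
    rw [diagonal_one, Matrix.mul_one, hU1]
  have hsum : ∑ i, μ i = 1 := by
    have h1 : ρᵀ.trace = 1 := by rw [trace_transpose, htr]
    rw [hspec, Matrix.trace_mul_cycle, hU2, Matrix.one_mul, trace_diagonal] at h1
    have h2 : ((∑ i, μ i : ℝ) : ℂ) = ((1:ℝ) : ℂ) := by push_cast; simpa using h1
    exact_mod_cast h2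
  refine ⟨μ, hT.eigenvalues_nonneg, hsum, ?_, ?_⟩
  · intro hPP i
    have hTT : ρᵀ * ρᵀ = ρᵀ := by rw [← transpose_mul, hPP]
    rw [hspec] at hTT
    have hkey : ∀ X : Matrix (Fin d) (Fin d) ℂ, star U * (U * X * star U) * U = X := by
      intro X
      rw [Matrix.mul_assoc U X, ← Matrix.mul_assoc (star U), hU2, Matrix.one_mul,
        Matrix.mul_assoc, hU2, Matrix.mul_one]
    have hdd : (U * Matrix.diagonal (Complex.ofReal ∘ μ) * star U) *
        (U * Matrix.diagonal (Complex.ofReal ∘ μ) * star U)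
        = U * (Matrix.diagonal (Complex.ofReal ∘ μ) * Matrix.diagonal (Complex.ofReal ∘ μ))
          * star U := by
      simp only [Matrix.mul_assoc]
      rw [← Matrix.mul_assoc (star U), hU2, Matrix.one_mul]
    rw [hdd] at hTT
    have hDD := congrArg (fun M => star U * M * U) hTT
    simp only [hkey] at hDD
    rw [diagonal_mul_diagonal] at hDD
    have := congrFun (congrFun hDD i) i
    simp only [Matrix.diagonal_apply_eq, Function.comp_apply, Pi.mul_apply] at this
    have hr : μ i * μ i = μ i := by exact_mod_cast this
    have hz : μ i * (μ i - 1) = 0 := by ring_nf; nlinarith [hr]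
    rcases mul_eq_zero.mp hz with h | h
    · exact Or.inl h
    · exact Or.inr (by linarith)
  · set ν : Fin d → ℝ := fun i => ((d:ℝ)+1)⁻¹ * (1 + μ i) - ((d:ℝ)-1)⁻¹ * (1 - μ i) with hνdef
    have hfun : ((d:ℂ)+1)⁻¹ • ((fun _ => (1:ℂ)) + Complex.ofReal ∘ μ)
        - ((d:ℂ)-1)⁻¹ • ((fun _ => (1:ℂ)) - Complex.ofReal ∘ μ) = Complex.ofReal ∘ ν := by
      funext i
      simp only [Pi.sub_apply, Pi.smul_apply, Pi.add_apply, Function.comp_apply, smul_eq_mul,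
        hνdef]
      push_cast
      ring
    have hM : Φ₀ ρ - Φ₁ ρ = U * Matrix.diagonal (Complex.ofReal ∘ ν) * star U := by
      rw [hΦ₀ ρ, hΦ₁ ρ, htr, one_smul, hspec, hone, hadd, hsub, hsmul, hsmul, hsub, hfun]
    rw [hM, traceNorm_conj_diag U hUmem ν]

/-- for the Werner–Holevo channels, `‖Φ₀(ρ) - Φ₁(ρ)‖₁ ≤ 4/(d+1)` for every
density operator `ρ`, with equality on every pure state. -/
theorem werner_holevo_ne_norm
    (d : ℕ) (hd : 2 ≤ d)
    (Φ₀ Φ₁ : Matrix (Fin d) (Fin d) ℂ → Matrix (Fin d) (Fin d) ℂ)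
    (hΦ₀ : ∀ X, Φ₀ X = ((d : ℂ) + 1)⁻¹ • (X.trace • (1 : Matrix (Fin d) (Fin d) ℂ) + Xᵀ))
    (hΦ₁ : ∀ X, Φ₁ X = ((d : ℂ) - 1)⁻¹ • (X.trace • (1 : Matrix (Fin d) (Fin d) ℂ) - Xᵀ)) :
    (∀ ρ : Matrix (Fin d) (Fin d) ℂ, IsDensity ρ →
      traceNorm (Φ₀ ρ - Φ₁ ρ) ≤ 4 / ((d : ℝ) + 1)) ∧
    (∀ ψ : Fin d → ℂ, star ψ ⬝ᵥ ψ = 1 →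
      traceNorm (Φ₀ (Matrix.vecMulVec ψ (star ψ)) - Φ₁ (Matrix.vecMulVec ψ (star ψ)))
        = 4 / ((d : ℝ) + 1)) := by
  have hdR : (2:ℝ) ≤ (d:ℝ) := by exact_mod_cast hd
  have h1 : ((d:ℝ)+1) ≠ 0 := by positivity
  have h2' : (0:ℝ) < (d:ℝ)-1 := by linarith
  have h2 : ((d:ℝ)-1) ≠ 0 := ne_of_gt h2'
  have h3' : (0:ℝ) < (d:ℝ)^2 - 1 := by nlinarith
  have h3 : ((d:ℝ)^2 - 1) ≠ 0 := ne_of_gt h3'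
  set c : ℝ := 2/((d:ℝ)^2-1) with hc_def
  have hc : 0 ≤ c := by positivity
  have hν : ∀ x : ℝ, ((d:ℝ)+1)⁻¹ * (1 + x) - ((d:ℝ)-1)⁻¹ * (1 - x) = c * ((d:ℝ)*x - 1) := by
    intro x
    rw [hc_def]
    field_simp
    ring
  have hfinal : c * (2*(d:ℝ) - 2) = 4 / ((d:ℝ)+1) := by
    rw [hc_def]
    rw [div_mul_eq_mul_div, div_eq_div_iff h3 h1]
    ring
  constructor
  · intro ρ hρ
    obtain ⟨μ, hμ0, hμsum, _, htn⟩ := wh_exists_eigen d Φ₀ Φ₁ hΦ₀ hΦ₁ ρ hρ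
    have hμ1 : ∀ i, μ i ≤ 1 := fun i =>
      hμsum ▸ Finset.single_le_sum (fun j _ => hμ0 j) (Finset.mem_univ i)
    rw [htn]
    simp_rw [hν, abs_mul, abs_of_nonneg hc]
    rw [← Finset.mul_sum]
    have key : ∑ i, |(d:ℝ)*μ i - 1| ≤ 2*(d:ℝ) - 2 := by
      calc ∑ i, |(d:ℝ)*μ i - 1| ≤ ∑ i, (((d:ℝ)-2)*μ i + 1) :=
            Finset.sum_le_sum fun i _ => by
              have h0 := hμ0 i
              have hle := hμ1 i
              refine abs_le.mpr ⟨by nlinarith, by nlinarith⟩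
        _ = 2*(d:ℝ) - 2 := by
            rw [Finset.sum_add_distrib, ← Finset.mul_sum, hμsum, Finset.sum_const,
              Finset.card_univ, Fintype.card_fin, nsmul_eq_mul, mul_one]
            ring
    calc c * ∑ i, |(d:ℝ)*μ i - 1| ≤ c * (2*(d:ℝ) - 2) := mul_le_mul_of_nonneg_left key hc
      _ = 4 / ((d:ℝ)+1) := hfinal
  · intro ψ hψ
    set P := Matrix.vecMulVec ψ (star ψ) with hP
    have hdens : IsDensity P := by
      refine ⟨PosSemidef.of_dotProduct_mulVec_nonneg ?_ ?_, ?_⟩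
      · ext i j
        simp [hP, conjTranspose_apply, vecMulVec_apply, mul_comm]
      · intro x
        have h : star x ⬝ᵥ (P *ᵥ x) = star (star ψ ⬝ᵥ x) * (star ψ ⬝ᵥ x) := by
          simp only [hP, dotProduct, mulVec, vecMulVec_apply, Pi.star_apply, star_sum, star_mul',
            star_star, Finset.mul_sum, Finset.sum_mul]
          rw [Finset.sum_comm]
          exact Finset.sum_congr rfl fun i _ => Finset.sum_congr rfl fun j _ => by ring
        rw [h]
        exact star_mul_self_nonneg _
      · have h : P.trace = ∑ i, ψ i * star ψ i := by
          simp [hP, Matrix.trace, Matrix.diag, vecMulVec_apply]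
        rw [h, ← hψ]
        exact Finset.sum_congr rfl fun i _ => mul_comm _ _
    have hPP : P * P = P := by
      ext i j
      simp only [hP, mul_apply, vecMulVec_apply]
      have h : ∀ k, ψ i * star ψ k * (ψ k * star ψ j)
          = (ψ i * star ψ j) * (star ψ k * ψ k) := fun k => by ring
      simp_rw [h, ← Finset.mul_sum]
      have h2 : ∑ k, star ψ k * ψ k = 1 := hψ
      rw [h2, mul_one]
    obtain ⟨μ, hμ0, hμsum, hidem, htn⟩ := wh_exists_eigen d Φ₀ Φ₁ hΦ₀ hΦ₁ P hdens
    have h01 := hidem hPP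
    rw [htn]
    simp_rw [hν, abs_mul, abs_of_nonneg hc]
    rw [← Finset.mul_sum]
    have key : ∑ i, |(d:ℝ)*μ i - 1| = 2*(d:ℝ) - 2 := by
      calc ∑ i, |(d:ℝ)*μ i - 1| = ∑ i, (((d:ℝ)-2)*μ i + 1) :=
            Finset.sum_congr rfl fun i _ => by
              rcases h01 i with h | h
              · rw [h]; simp
              · rw [h, mul_one, mul_one, abs_of_nonneg (by linarith)]
                ring
        _ = 2*(d:ℝ) - 2 := by
            rw [Finset.sum_add_distrib, ← Finset.mul_sum, hμsum, Finset.sum_const,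
              Finset.card_univ, Fintype.card_fin, nsmul_eq_mul, mul_one]
            ring
    rw [key, hfinal]
end
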